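/- In a simple probabilistic relation with tuples t_1,...,t_n sorted so that t_1 ≻ t_2 ≻ ... ≻ t_n (strictly decreasing scores), the Global-Topk probability q(k,i) of tuple t_i satisfies the recursion: q(0,i) = 0; q(k,i) = p(t_i) for 1 ≤ i ≤ k; and q(k,i) = (q(k,i−1)·(1−p(t_{i−1}))/p(t_{i−1}) + q(k−1,i−1))·p(t_i) otherwise. -/

import Mathlib

open Finset

private lemma tot (p : ℕ → ℝ) (T : Finset ℕ) :
    ∑ V ∈ T.powerset, (∏ j ∈ V, p j) * ∏ j ∈ T \ V, (1 - p j) = 1 := by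
  rw [← Finset.prod_add]
  simp

private lemma sdiff_eq_erase {T W : Finset ℕ} {a : ℕ} (haW : a ∈ W) :
    T \ W = (T.erase a) \ (W.erase a) := by
  ext x
  simp only [mem_sdiff, mem_erase]
  constructor
  · rintro ⟨hxT, hxW⟩
    exact ⟨⟨fun h => hxW (h ▸ haW), hxT⟩, fun h => hxW h.2⟩
  · rintro ⟨⟨hxa, hxT⟩, h⟩
    exact ⟨hxT, fun hxW => h ⟨hxa, hxW⟩⟩

private lemma sum_mem_eq (p : ℕ → ℝ) (T : Finset ℕ) (a : ℕ) (ha : a ∈ T)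
    (c : Finset ℕ → Prop) [DecidablePred c] :
    ∑ W ∈ T.powerset.filter (fun W => a ∈ W ∧ c W),
      (∏ j ∈ W, p j) * ∏ j ∈ T \ W, (1 - p j)
    = p a * ∑ V ∈ (T.erase a).powerset.filter (fun V => c (insert a V)),
      (∏ j ∈ V, p j) * ∏ j ∈ (T.erase a) \ V, (1 - p j) := by
  rw [Finset.mul_sum]
  refine Finset.sum_nbij' (fun W => W.erase a) (fun V => insert a V) ?_ ?_ ?_ ?_ ?_
  · intro W hW
    simp only [mem_filter, mem_powerset] at hW ⊢
    obtain ⟨hWT, haW, hc⟩ := hW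
    refine ⟨erase_subset_erase a hWT, ?_⟩
    rwa [insert_erase haW]
  · intro V hV
    simp only [mem_filter, mem_powerset, Finset.subset_erase] at hV ⊢
    obtain ⟨⟨hVT, haV⟩, hc⟩ := hV
    exact ⟨insert_subset ha hVT, mem_insert_self a V, hc⟩
  · intro W hW
    simp only [mem_filter, mem_powerset] at hW
    exact insert_erase hW.2.1
  · intro V hV
    simp only [mem_filter, mem_powerset, Finset.subset_erase] at hV
    exact erase_insert hV.1.2
  · intro W hW
    simp only [mem_filter, mem_powerset] at hW
    obtain ⟨hWT, haW, hc⟩ := hW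
    rw [← Finset.mul_prod_erase W p haW, sdiff_eq_erase haW]
    ring

private lemma sum_not_mem_eq (p : ℕ → ℝ) (T : Finset ℕ) (a : ℕ) (ha : a ∈ T)
    (c : Finset ℕ → Prop) [DecidablePred c] :
    ∑ W ∈ T.powerset.filter (fun W => a ∉ W ∧ c W),
      (∏ j ∈ W, p j) * ∏ j ∈ T \ W, (1 - p j)
    = (1 - p a) * ∑ V ∈ (T.erase a).powerset.filter c,
      (∏ j ∈ V, p j) * ∏ j ∈ (T.erase a) \ V, (1 - p j) := by
  rw [Finset.mul_sum]
  have hset : T.powerset.filter (fun W => a ∉ W ∧ c W)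
      = (T.erase a).powerset.filter c := by
    ext W
    simp only [mem_filter, mem_powerset, Finset.subset_erase]
    tauto
  rw [hset]
  refine Finset.sum_congr rfl fun V hV => ?_
  simp only [mem_filter, mem_powerset, Finset.subset_erase] at hV
  have hsd : T \ V = insert a ((T.erase a) \ V) := by
    ext x
    simp only [mem_sdiff, mem_insert, mem_erase]
    constructor
    · rintro ⟨hxT, hxV⟩
      by_cases hx : x = a
      · exact Or.inl hx
      · exact Or.inr ⟨⟨hx, hxT⟩, hxV⟩
    · rintro (rfl | ⟨⟨_, hxT⟩, hxV⟩)
      · exact ⟨ha, hV.1.2⟩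
      · exact ⟨hxT, hxV⟩
  rw [hsd, Finset.prod_insert (by simp)]
  ring

/-- split a sum over subsets on membership of `a`. -/
private lemma sum_split (f : Finset ℕ → ℝ) (s : Finset (Finset ℕ)) (a : ℕ)
    (c : Finset ℕ → Prop) [DecidablePred c] :
    ∑ W ∈ s.filter c, f W
    = ∑ W ∈ s.filter (fun W => a ∈ W ∧ c W), f W
      + ∑ W ∈ s.filter (fun W => a ∉ W ∧ c W), f W := by
  rw [← Finset.sum_filter_add_sum_filter_not (s.filter c) (fun W => a ∈ W) f,
    Finset.filter_filter, Finset.filter_filter]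
  congr 1 <;> exact Finset.sum_congr (Finset.filter_congr fun _ _ => by tauto) fun _ _ => rfl

/-- marginalization: if `c` is insensitive to `a`, drop `a` from the ground set. -/
private lemma sum_marginal (p : ℕ → ℝ) (T : Finset ℕ) (a : ℕ) (ha : a ∈ T)
    (c : Finset ℕ → Prop) [DecidablePred c]
    (hins : ∀ V, a ∉ V → (c (insert a V) ↔ c V)) :
    ∑ W ∈ T.powerset.filter c, (∏ j ∈ W, p j) * ∏ j ∈ T \ W, (1 - p j)
    = ∑ V ∈ (T.erase a).powerset.filter c,
      (∏ j ∈ V, p j) * ∏ j ∈ (T.erase a) \ V, (1 - p j) := by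
  rw [sum_split _ _ a, sum_mem_eq p T a ha c, sum_not_mem_eq p T a ha c]
  have : (T.erase a).powerset.filter (fun V => c (insert a V))
      = (T.erase a).powerset.filter c := by
    refine Finset.filter_congr fun V hV => ?_
    simp only [mem_powerset, Finset.subset_erase] at hV
    exact hins V hV.2
  rw [this]
  ring

/-- if `c` is insensitive to `a`, then restricting to `a ∈ W` multiplies by `p a`. -/
private lemma sum_restrict (p : ℕ → ℝ) (T : Finset ℕ) (a : ℕ) (ha : a ∈ T)
    (c : Finset ℕ → Prop) [DecidablePred c]
    (hins : ∀ V, a ∉ V → (c (insert a V) ↔ c V)) :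
    ∑ W ∈ T.powerset.filter (fun W => a ∈ W ∧ c W),
      (∏ j ∈ W, p j) * ∏ j ∈ T \ W, (1 - p j)
    = p a * ∑ W ∈ T.powerset.filter c,
      (∏ j ∈ W, p j) * ∏ j ∈ T \ W, (1 - p j) := by
  rw [sum_mem_eq p T a ha c, sum_marginal p T a ha c hins]
  congr 1
  refine Finset.sum_congr (Finset.filter_congr fun V hV => ?_) fun _ _ => rfl
  simp only [mem_powerset, Finset.subset_erase] at hV
  exact hins V hV.2

/-- Recursion for Global-Topk probabilities in a simple probabilistic relation
with tuples `1, ..., n` sorted by strictly decreasing score. -/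
theorem globalTopk_recursion (n : ℕ) (p : ℕ → ℝ)
    (hp : ∀ i ∈ Finset.Icc 1 n, p i ∈ Set.Ioc (0 : ℝ) 1)
    (q : ℕ → ℕ → ℝ)
    (hq : ∀ k i, q k i =
      ∑ W ∈ (Finset.Icc 1 n).powerset.filter
          (fun W => i ∈ W ∧ (W.filter (fun j => j < i)).card < k),
        (∏ j ∈ W, p j) * ∏ j ∈ Finset.Icc 1 n \ W, (1 - p j)) :
    (∀ i ∈ Finset.Icc 1 n, q 0 i = 0) ∧
    (∀ k i, 1 ≤ i → i ≤ k → i ≤ n → q k i = p i) ∧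
    (∀ k i, 1 ≤ k → k < i → i ≤ n →
      q k i = (q k (i - 1) * (1 - p (i - 1)) / p (i - 1) + q (k - 1) (i - 1)) * p i) := by
  refine ⟨?_, ?_, ?_⟩
  · intro i _
    rw [hq]; simp
  · intro k i hi1 hik hin
    rw [hq]
    have hmem : i ∈ Icc 1 n := mem_Icc.mpr ⟨hi1, hin⟩
    have hfc : (Icc 1 n).powerset.filter
          (fun W => i ∈ W ∧ (W.filter (fun j => j < i)).card < k)
        = (Icc 1 n).powerset.filter (fun W => i ∈ W ∧ (fun _ : Finset ℕ => True) W) := by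
      refine filter_congr fun W hW => ?_
      simp only [mem_powerset] at hW
      have hcard : (W.filter (fun j => j < i)).card < k := by
        have hsub : W.filter (fun j => j < i) ⊆ Icc 1 (i - 1) := by
          intro j hj
          simp only [mem_filter] at hj
          have := hW hj.1
          simp only [mem_Icc] at this ⊢
          omega
        have := card_le_card hsub
        rw [Nat.card_Icc] at this
        omega
      simp [hcard]
    rw [hfc, sum_restrict p _ i hmem (fun _ => True) (by simp), Finset.filter_true, tot, mul_one]
  · intro k i hk hki hin
    obtain ⟨a, rfl⟩ : ∃ a, i = a + 1 := ⟨i - 1, by omega⟩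
    have haS : a ∈ Icc 1 n := mem_Icc.mpr ⟨by omega, by omega⟩
    have hiS : a + 1 ∈ Icc 1 n := mem_Icc.mpr ⟨by omega, hin⟩
    have hpapos : p a ≠ 0 := ne_of_gt (hp a haS).1
    simp only [Nat.add_sub_cancel]
    have hinsa : ∀ m : ℕ, ∀ V : Finset ℕ, a ∉ V →
        ((((insert a V).filter (fun j => j < a)).card < m) ↔
          ((V.filter (fun j => j < a)).card < m)) := by
      intro m V haV
      rw [Finset.filter_insert]
      simp
    have hqa : ∀ m, q m a = p a *
        ∑ V ∈ ((Icc 1 n).erase a).powerset.filter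
          (fun V => (V.filter (fun j => j < a)).card < m),
        (∏ j ∈ V, p j) * ∏ j ∈ ((Icc 1 n).erase a) \ V, (1 - p j) := by
      intro m
      rw [hq, sum_restrict p _ a haS _ (hinsa m), sum_marginal p _ a haS _ (hinsa m)]
    have hinsi : ∀ V : Finset ℕ, (a + 1) ∉ V →
        ((((insert (a+1) V).filter (fun j => j < a + 1)).card < k) ↔
          ((V.filter (fun j => j < a + 1)).card < k)) := by
      intro V hV
      rw [Finset.filter_insert]
      simp
    rw [hq k (a+1), sum_restrict p _ (a+1) hiS _ hinsi,
      sum_split _ _ a, sum_mem_eq p _ a haS, sum_not_mem_eq p _ a haS]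
    have e1 : ((Icc 1 n).erase a).powerset.filter
          (fun V => ((insert a V).filter (fun j => j < a + 1)).card < k)
        = ((Icc 1 n).erase a).powerset.filter
          (fun V => (V.filter (fun j => j < a)).card < k - 1) := by
      refine filter_congr fun V hV => ?_
      simp only [mem_powerset, Finset.subset_erase] at hV
      have hfil : V.filter (fun j => j < a + 1) = V.filter (fun j => j < a) := by
        refine filter_congr fun j hj => ?_
        have : j ≠ a := fun h => hV.2 (h ▸ hj)
        constructor <;> intro <;> omega
      rw [Finset.filter_insert, if_pos (Nat.lt_succ_self a),
        Finset.card_insert_of_notMem (fun h => hV.2 (mem_filter.mp h).1), hfil]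
      omega
    have e2 : ((Icc 1 n).erase a).powerset.filter
          (fun V => (V.filter (fun j => j < a + 1)).card < k)
        = ((Icc 1 n).erase a).powerset.filter
          (fun V => (V.filter (fun j => j < a)).card < k) := by
      refine filter_congr fun V hV => ?_
      simp only [mem_powerset, Finset.subset_erase] at hV
      have hfil : V.filter (fun j => j < a + 1) = V.filter (fun j => j < a) := by
        refine filter_congr fun j hj => ?_
        have : j ≠ a := fun h => hV.2 (h ▸ hj)
        constructor <;> intro <;> omega
      rw [hfil]
    rw [e1, e2, hqa k, hqa (k-1)]
    field_simp
    ring
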